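/- arXiv:2209.03551 — 2 statements merged into one kernel-verified Lean document; each statement's English description precedes it below -/
import Mathlib

section
/- Fix n ≥ 1. A one-row semistandard shifted bar tableau of shape (n) with entries in {1′, 1, 2′, 2} is a pair (w, Π) where w = (w_1, …, w_n) is weakly increasing in the order 1′ < 1 < 2′ < 2 with the letters 1′ and 2′ each occurring at most once, and Π is a partition of {1,…,n} into nonempty contiguous blocks on each of which w is constant. Define the weight of (w, Π) as the pair (a, b), where a is the number of blocks on which the value is 1′ or 1, and b the number on which it is 2′ or 2. Then for all nonnegative integers a, b, the number of such tableaux of weight (a, b) equals the number of weight (b, a). -/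
open Finset
open scoped Classical

/-- A one-row semistandard shifted bar tableau of shape (n) with entries in
    {1′ < 1 < 2′ < 2}, encoded as Fin 4 with 0 = 1′, 1 = 1, 2 = 2′, 3 = 2, together with
    the prescribed weight (a, b).  The pair x = (w, s) consists of the (weakly increasing)
    word w, in which the primed letters 1′ and 2′ each occur at most once, and the
    indicator s of the positions starting a new bar: position 0 always starts a bar, and
    a position that does not start a new bar carries the same letter as its predecessor
    (so w is constant on the contiguous blocks).  The weight (a, b) records the number of
    bars with letter 1′ or 1, and with letter 2′ or 2, respectively. -/
def IsOneRowShBT (n : ℕ) (x : (Fin n → Fin 4) × (Fin n → Bool)) (a b : ℕ) : Prop :=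
  Monotone x.1 ∧
  (Finset.univ.filter (fun i => x.1 i = (0 : Fin 4))).card ≤ 1 ∧
  (Finset.univ.filter (fun i => x.1 i = (2 : Fin 4))).card ≤ 1 ∧
  (∀ i : Fin n, (i : ℕ) = 0 → x.2 i = true) ∧
  (∀ i j : Fin n, (j : ℕ) = (i : ℕ) + 1 → x.2 j = false → x.1 j = x.1 i) ∧
  (Finset.univ.filter (fun i => x.2 i = true ∧ ((x.1 i : ℕ) < 2))).card = a ∧
  (Finset.univ.filter (fun i => x.2 i = true ∧ (2 ≤ (x.1 i : ℕ)))).card = b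

set_option maxHeartbeats 1000000


def bkW (n m e0 e2 : ℕ) : Fin n → Fin 4 := fun i : Fin n =>
  if (i : ℕ) < m then (if (i : ℕ) = 0 ∧ e0 = 1 then 0 else 1)
  else (if (i : ℕ) = m ∧ e2 = 1 then 2 else 3)

lemma bkW_val {n : ℕ} (m e0 e2 : ℕ) (i : Fin n) :
    ((bkW n m e0 e2 i : ℕ)) =
      if (i : ℕ) < m then (if (i : ℕ) = 0 ∧ e0 = 1 then 0 else 1)
      else (if (i : ℕ) = m ∧ e2 = 1 then 2 else 3) := by
  unfold bkW; split_ifs <;> rfl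

lemma bkW_lt_two_iff {n : ℕ} (m e0 e2 : ℕ) (i : Fin n) :
    ((bkW n m e0 e2 i : ℕ) < 2) ↔ (i : ℕ) < m := by
  rw [bkW_val]; split_ifs <;> simp_all <;> omega

lemma bkW_mono {n : ℕ} (m e0 e2 : ℕ) : Monotone (bkW n m e0 e2) := by
  intro i j hij
  rw [Fin.le_def, bkW_val, bkW_val]
  have : (i : ℕ) ≤ (j : ℕ) := hij
  split_ifs <;> omega

lemma card_filter_val_lt (n M : ℕ) (hM : M ≤ n) :
    ((univ : Finset (Fin n)).filter (fun i : Fin n => (i : ℕ) < M)).card = M := by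
  rw [show ((univ : Finset (Fin n)).filter (fun i : Fin n => (i : ℕ) < M))
      = (Finset.range M).attachFin (fun m hm => lt_of_lt_of_le (Finset.mem_range.mp hm) hM) from by
    ext i; simp]
  rw [Finset.card_attachFin, Finset.card_range]

lemma lt_two_iff {n : ℕ} {w : Fin n → Fin 4} (hm : Monotone w) (i : Fin n) :
    ((w i : ℕ) < 2) ↔ (i : ℕ) < ((univ : Finset (Fin n)).filter (fun k : Fin n => ((w k : ℕ) < 2))).card := by
  constructor
  · intro hi
    have hsub : ((univ : Finset (Fin n)).filter (fun k : Fin n => (k : ℕ) < (i : ℕ) + 1))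
        ⊆ ((univ : Finset (Fin n)).filter (fun k : Fin n => ((w k : ℕ) < 2))) := by
      intro k hk
      simp only [mem_filter, mem_univ, true_and] at hk ⊢
      have hk' : k ≤ i := by rw [Fin.le_def]; omega
      exact lt_of_le_of_lt (Fin.le_def.mp (hm hk')) hi
    have := Finset.card_le_card hsub
    rw [card_filter_val_lt n ((i : ℕ) + 1) i.isLt] at this
    omega
  · intro hi
    by_contra hw
    have hsub : ((univ : Finset (Fin n)).filter (fun k : Fin n => ((w k : ℕ) < 2)))
        ⊆ ((univ : Finset (Fin n)).filter (fun k : Fin n => (k : ℕ) < (i : ℕ))) := by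
      intro k hk
      simp only [mem_filter, mem_univ, true_and] at hk ⊢
      by_contra hik
      have hik' : i ≤ k := by rw [Fin.le_def]; omega
      have := Fin.le_def.mp (hm hik')
      omega
    have := Finset.card_le_card hsub
    rw [card_filter_val_lt n (i : ℕ) (le_of_lt i.isLt)] at this
    omega

lemma bkW_eq_zero_iff {n : ℕ} (m e0 e2 : ℕ) (i : Fin n) :
    bkW n m e0 e2 i = 0 ↔ ((i : ℕ) < m ∧ (i : ℕ) = 0 ∧ e0 = 1) := by
  rw [show (bkW n m e0 e2 i = 0) ↔ ((bkW n m e0 e2 i : ℕ) = 0) from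
    ⟨fun h => by rw [h]; rfl, fun h => Fin.ext h⟩]
  rw [bkW_val]; split_ifs <;> simp_all <;> omega

lemma bkW_eq_two_iff {n : ℕ} (m e0 e2 : ℕ) (i : Fin n) :
    bkW n m e0 e2 i = 2 ↔ (¬ (i : ℕ) < m ∧ (i : ℕ) = m ∧ e2 = 1) := by
  rw [show (bkW n m e0 e2 i = 2) ↔ ((bkW n m e0 e2 i : ℕ) = 2) from
    ⟨fun h => by rw [h]; rfl, fun h => Fin.ext h⟩]
  rw [bkW_val]; split_ifs <;> simp_all <;> omega

lemma card_bkW_zero {n : ℕ} (m e0 e2 : ℕ) (hm : m ≤ n) (h0 : e0 ≤ 1) (h0m : e0 = 1 → 0 < m) :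
    ((univ : Finset (Fin n)).filter (fun i : Fin n => bkW n m e0 e2 i = 0)).card = e0 := by
  interval_cases e0
  · rw [Finset.card_eq_zero, Finset.filter_eq_empty_iff]
    intro i _
    rw [bkW_eq_zero_iff]
    have := i.isLt
    omega
  · have hmpos : 0 < m := h0m rfl
    rw [show ((univ : Finset (Fin n)).filter (fun i : Fin n => bkW n m 1 e2 i = 0))
        = {(⟨0, lt_of_lt_of_le hmpos hm⟩ : Fin n)} from by
      ext i
      simp only [mem_filter, mem_univ, true_and, Finset.mem_singleton, bkW_eq_zero_iff]
      rw [Fin.ext_iff]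
      simp only [Fin.val_mk, and_true]
      have := i.isLt
      omega]
    simp

lemma card_bkW_two {n : ℕ} (m e0 e2 : ℕ) (h2 : e2 ≤ 1) (h2m : e2 = 1 → m < n) :
    ((univ : Finset (Fin n)).filter (fun i : Fin n => bkW n m e0 e2 i = 2)).card = e2 := by
  interval_cases e2
  · rw [Finset.card_eq_zero, Finset.filter_eq_empty_iff]
    intro i _
    rw [bkW_eq_two_iff]
    have := i.isLt
    omega
  · have hmn : m < n := h2m rfl
    rw [show ((univ : Finset (Fin n)).filter (fun i : Fin n => bkW n m e0 1 i = 2))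
        = {(⟨m, hmn⟩ : Fin n)} from by
      ext i
      simp only [mem_filter, mem_univ, true_and, Finset.mem_singleton, bkW_eq_two_iff]
      rw [Fin.ext_iff]
      simp only [Fin.val_mk, and_true]
      have := i.isLt
      omega]
    simp

abbrev cm (n : ℕ) (w : Fin n → Fin 4) : ℕ :=
  ((univ : Finset (Fin n)).filter (fun i : Fin n => ((w i : ℕ) < 2))).card
abbrev ce0 (n : ℕ) (w : Fin n → Fin 4) : ℕ :=
  ((univ : Finset (Fin n)).filter (fun i : Fin n => w i = (0 : Fin 4))).card
abbrev ce2 (n : ℕ) (w : Fin n → Fin 4) : ℕ :=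
  ((univ : Finset (Fin n)).filter (fun i : Fin n => w i = (2 : Fin 4))).card

lemma shape {n a b : ℕ} {x : (Fin n → Fin 4) × (Fin n → Bool)} (h : IsOneRowShBT n x a b) :
    cm n x.1 ≤ n ∧ ce0 n x.1 ≤ 1 ∧ ce2 n x.1 ≤ 1 ∧
    (ce0 n x.1 = 1 → 0 < cm n x.1) ∧ (ce2 n x.1 = 1 → cm n x.1 < n) ∧
    x.1 = bkW n (cm n x.1) (ce0 n x.1) (ce2 n x.1) := by
  obtain ⟨hmono, h0, h2, hs0, hadj, ha, hb⟩ := h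
  replace h0 : ce0 n x.1 ≤ 1 := h0
  replace h2 : ce2 n x.1 ≤ 1 := h2
  have hchar : ∀ k : Fin n, ((x.1 k : ℕ) < 2) ↔ (k : ℕ) < cm n x.1 :=
    fun k => lt_two_iff hmono k
  have hmn : cm n x.1 ≤ n := by
    have := Finset.card_filter_le (univ : Finset (Fin n))
      (fun i : Fin n => ((x.1 i : ℕ) < 2))
    exact le_trans this (by simp)
  refine ⟨hmn, h0, h2, ?_, ?_, ?_⟩
  · intro h1
    obtain ⟨i, hi⟩ := Finset.card_pos.mp (show 0 < ce0 n x.1 by omega)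
    simp only [mem_filter, mem_univ, true_and] at hi
    have : (x.1 i : ℕ) < 2 := by rw [hi]; norm_num
    have := (hchar i).mp this
    omega
  · intro h1
    obtain ⟨i, hi⟩ := Finset.card_pos.mp (show 0 < ce2 n x.1 by omega)
    simp only [mem_filter, mem_univ, true_and] at hi
    have h2v : ¬ ((x.1 i : ℕ) < 2) := by rw [hi]; norm_num
    have := i.isLt
    have hnot : ¬ ((i : ℕ) < cm n x.1) := fun hh => h2v ((hchar i).mpr hh)
    omega
  · funext i
    apply Fin.ext
    rw [bkW_val]
    by_cases him : (i : ℕ) < cm n x.1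
    · have hv2 : (x.1 i : ℕ) < 2 := (hchar i).mpr him
      rw [if_pos him]
      by_cases hc : (i : ℕ) = 0 ∧ ce0 n x.1 = 1
      · rw [if_pos hc]
        obtain ⟨j, hj⟩ := Finset.card_pos.mp (show 0 < ce0 n x.1 by omega)
        simp only [mem_filter, mem_univ, true_and] at hj
        have hij : i ≤ j := by rw [Fin.le_def]; omega
        have := Fin.le_def.mp (hmono hij)
        rw [hj] at this
        simpa using this
      · rw [if_neg hc]
        by_contra hne
        have hv0 : (x.1 i : ℕ) = 0 := by omega
        have hi0 : x.1 i = 0 := Fin.ext (by simpa using hv0)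
        have hipos := i.pos
        set i0 : Fin n := ⟨0, hipos⟩ with hi0def
        have hi0v : (i0 : ℕ) = 0 := rfl
        have hle : x.1 i0 ≤ x.1 i := hmono (by rw [Fin.le_def]; omega)
        have h00 : x.1 i0 = 0 := by
          rw [hi0] at hle
          exact le_antisymm hle (Fin.zero_le _)
        by_cases hii : (i : ℕ) = 0
        · have : 0 < ce0 n x.1 := Finset.card_pos.mpr ⟨i, by simp [hi0]⟩
          exact hc ⟨hii, by omega⟩
        · have h2lt : 1 < ce0 n x.1 := by
            apply Finset.one_lt_card.mpr
            refine ⟨i0, by simp [h00], i, by simp [hi0], ?_⟩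
            intro he
            rw [Fin.ext_iff] at he
            simp [hi0def] at he
            omega
          omega
    · have hv2 : ¬ ((x.1 i : ℕ) < 2) := fun hh => him ((hchar i).mp hh)
      rw [if_neg him]
      by_cases hc : (i : ℕ) = cm n x.1 ∧ ce2 n x.1 = 1
      · rw [if_pos hc]
        obtain ⟨j, hj⟩ := Finset.card_pos.mp (show 0 < ce2 n x.1 by omega)
        simp only [mem_filter, mem_univ, true_and] at hj
        have hjv : ¬ ((x.1 j : ℕ) < 2) := by rw [hj]; norm_num
        have hjm : cm n x.1 ≤ (j : ℕ) := by
          have hnot : ¬ ((j : ℕ) < cm n x.1) := fun hh => hjv ((hchar j).mpr hh)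
          omega
        have hij : i ≤ j := by rw [Fin.le_def]; omega
        have h1 := Fin.le_def.mp (hmono hij)
        rw [hj] at h1
        have h1' : (x.1 i : ℕ) ≤ 2 := by simpa using h1
        have h4 := (x.1 i).isLt
        omega
      · rw [if_neg hc]
        by_contra hne
        have h4 := (x.1 i).isLt
        have hv : (x.1 i : ℕ) = 2 := by omega
        have hi2 : x.1 i = 2 := Fin.ext (by simpa using hv)
        have hmlt : cm n x.1 < n := lt_of_le_of_lt (by omega) i.isLt
        set im : Fin n := ⟨cm n x.1, hmlt⟩ with himdef
        have himvv : (im : ℕ) = cm n x.1 := rfl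
        have hle : x.1 im ≤ x.1 i := hmono (by rw [Fin.le_def]; simp; omega)
        have himv : ¬ ((x.1 im : ℕ) < 2) := by
          intro hh
          have := (hchar im).mp hh
          simp [himdef] at this
        have hle' := Fin.le_def.mp hle
        rw [hi2] at hle'
        have hle'' : (x.1 im : ℕ) ≤ 2 := by simpa using hle'
        have himlow : ¬ ((x.1 im : ℕ) < 2) := himv
        have him2 : x.1 im = 2 := Fin.ext (by simp only [show ((2:Fin 4):ℕ) = 2 from rfl]; omega)
        by_cases hii : (i : ℕ) = cm n x.1
        · have : 0 < ce2 n x.1 := Finset.card_pos.mpr ⟨i, by simp [hi2]⟩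
          exact hc ⟨hii, by omega⟩
        · have h2lt : 1 < ce2 n x.1 := by
            apply Finset.one_lt_card.mpr
            refine ⟨im, by simp [him2], i, by simp [hi2], ?_⟩
            intro he
            rw [Fin.ext_iff] at he
            simp [himdef] at he
            omega
          omega

lemma mod_cases (n v : ℕ) (hv : v < 2 * n) : v % n = if v < n then v else v - n := by
  split_ifs with h
  · exact Nat.mod_eq_of_lt h
  · rw [Nat.mod_eq_sub_mod (le_of_not_gt h)]
    exact Nat.mod_eq_of_lt (by omega)

lemma bkW_is (n m e0 e2 a' b' : ℕ) (s' : Fin n → Bool) (hmn : m ≤ n) (h0 : e0 ≤ 1)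
    (h2 : e2 ≤ 1) (h0m : e0 = 1 → 0 < m) (h2m : e2 = 1 → m < n)
    (hs0 : ∀ i : Fin n, (i : ℕ) = 0 → s' i = true)
    (hadj : ∀ i j : Fin n, (j : ℕ) = (i : ℕ) + 1 → s' j = false →
      bkW n m e0 e2 j = bkW n m e0 e2 i)
    (hca : ((univ : Finset (Fin n)).filter (fun i : Fin n => s' i = true ∧ (i : ℕ) < m)).card = a')
    (hcb : ((univ : Finset (Fin n)).filter (fun i : Fin n => s' i = true ∧ m ≤ (i : ℕ))).card = b') :
    IsOneRowShBT n (bkW n m e0 e2, s') a' b' := by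
  refine ⟨bkW_mono m e0 e2, ?_, ?_, hs0, hadj, ?_, ?_⟩
  · rw [show ((univ : Finset (Fin n)).filter (fun i : Fin n => bkW n m e0 e2 i = 0)).card = e0
      from card_bkW_zero m e0 e2 hmn h0 h0m]
    exact h0
  · rw [show ((univ : Finset (Fin n)).filter (fun i : Fin n => bkW n m e0 e2 i = 2)).card = e2
      from card_bkW_two m e0 e2 h2 h2m]
    exact h2
  · rw [show ((univ : Finset (Fin n)).filter
        (fun i : Fin n => s' i = true ∧ ((bkW n m e0 e2 i : ℕ) < 2)))
        = ((univ : Finset (Fin n)).filter (fun i : Fin n => s' i = true ∧ (i : ℕ) < m))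
      from Finset.filter_congr (fun k _ => by rw [bkW_lt_two_iff])]
    exact hca
  · rw [show ((univ : Finset (Fin n)).filter
        (fun i : Fin n => s' i = true ∧ (2 ≤ (bkW n m e0 e2 i : ℕ))))
        = ((univ : Finset (Fin n)).filter (fun i : Fin n => s' i = true ∧ m ≤ (i : ℕ)))
      from Finset.filter_congr (fun k _ => by
        have := bkW_lt_two_iff m e0 e2 k
        constructor
        · rintro ⟨hs, hv⟩; exact ⟨hs, by omega⟩
        · rintro ⟨hs, hv⟩; exact ⟨hs, by omega⟩)]
    exact hcb

def bkMap (n : ℕ) (x : (Fin n → Fin 4) × (Fin n → Bool)) : (Fin n → Fin 4) × (Fin n → Bool) :=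
  (bkW n (n - cm n x.1) (ce2 n x.1) (ce0 n x.1),
   fun i : Fin n => x.2 ⟨((i : ℕ) + cm n x.1) % n, Nat.mod_lt _ i.pos⟩)

lemma bk_mem {n a b : ℕ} {x : (Fin n → Fin 4) × (Fin n → Bool)} (h : IsOneRowShBT n x a b) :
    IsOneRowShBT n (bkMap n x) b a := by
  obtain ⟨hmn, h0, h2, h0m, h2m, hw⟩ := shape h
  obtain ⟨hmono, -, -, hs0, hadj, ha, hb⟩ := h
  have hchar : ∀ k : Fin n, ((x.1 k : ℕ) < 2) ↔ (k : ℕ) < cm n x.1 :=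
    fun k => lt_two_iff hmono k
  have hadjv : ∀ (u v : ℕ) (hu : u < n) (hv2 : v < n), v = u + 1 →
      x.2 ⟨v, hv2⟩ = false → ((x.1 ⟨v, hv2⟩ : ℕ)) = ((x.1 ⟨u, hu⟩ : ℕ)) :=
    fun u v hu hv2 he hf => by rw [hadj ⟨u, hu⟩ ⟨v, hv2⟩ he hf]
  have hwv : ∀ (u : ℕ) (hu : u < n), ((x.1 ⟨u, hu⟩ : ℕ)) =
      if u < cm n x.1 then (if u = 0 ∧ ce0 n x.1 = 1 then 0 else 1)
      else (if u = cm n x.1 ∧ ce2 n x.1 = 1 then 2 else 3) := fun u hu => by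
    conv_lhs => rw [hw]
    exact bkW_val _ _ _ ⟨u, hu⟩
  have hx2 : ∀ (v : ℕ) (hv : v < n) (k : Fin n), v = (k : ℕ) → x.2 ⟨v, hv⟩ = x.2 k := by
    intro v hv k he
    exact congrArg x.2 (Fin.ext (show ((⟨v, hv⟩ : Fin n) : ℕ) = (k : ℕ) from he))
  show IsOneRowShBT n
    (bkW n (n - cm n x.1) (ce2 n x.1) (ce0 n x.1),
      fun i : Fin n => x.2 ⟨((i : ℕ) + cm n x.1) % n, Nat.mod_lt _ i.pos⟩) b a
  refine bkW_is n (n - cm n x.1) (ce2 n x.1) (ce0 n x.1) b a _ (Nat.sub_le n (cm n x.1))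
    h2 h0 (fun h1 => by have := h2m h1; omega)
    (fun h1 => by have h1' := h0m h1; exact Nat.sub_lt (by omega) (by omega)) ?_ ?_ ?_ ?_
  · -- start condition
    intro i hi
    have hn0 : 0 < n := i.pos
    have hstart : ∀ k : Fin n, (k : ℕ) = cm n x.1 % n → x.2 k = true := by
      intro k hk
      rcases eq_or_lt_of_le hmn with heq | hlt
      · exact hs0 k (by rw [hk, heq, Nat.mod_self])
      · have hkm : (k : ℕ) = cm n x.1 := by rw [hk]; exact Nat.mod_eq_of_lt hlt
        rcases Nat.eq_zero_or_pos (cm n x.1) with hm0 | hmpos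
        · exact hs0 k (by omega)
        · by_contra hkf
          have hkf' : x.2 k = false := by
            cases hxk : x.2 k
            · rfl
            · exact absurd hxk hkf
          have hval := hadjv (cm n x.1 - 1) (k : ℕ) (by omega) k.isLt (by omega)
            (by
              have : (⟨(k : ℕ), k.isLt⟩ : Fin n) = k := Fin.ext rfl
              rw [this]; exact hkf')
          rw [hwv, hwv] at hval
          have hk2 : ¬ ((k : ℕ) < cm n x.1) := by omega
          rw [if_neg hk2, if_pos (show cm n x.1 - 1 < cm n x.1 by omega)] at hval
          split_ifs at hval <;> omega
    exact hstart _ (by show ((i : ℕ) + cm n x.1) % n = cm n x.1 % n; rw [hi, Nat.zero_add])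
  · -- adjacency
    intro i j hj hsf
    have hn0 : 0 < n := i.pos
    have hjlt := j.isLt
    have hilt := i.isLt
    apply Fin.ext
    rw [bkW_val, bkW_val]
    rcases lt_trichotomy ((j : ℕ) + cm n x.1) n with hlt | heq | hgt
    · have hidx : ((j : ℕ) + cm n x.1) % n = (i : ℕ) + cm n x.1 + 1 := by
        rw [Nat.mod_eq_of_lt hlt]; omega
      have hval := hadjv ((i : ℕ) + cm n x.1) (((j : ℕ) + cm n x.1) % n)
        (by omega) (Nat.mod_lt _ j.pos) (by omega) hsf
      rw [hwv, hwv, hidx] at hval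
      split_ifs at hval ⊢ <;> omega
    · exfalso
      have : x.2 ⟨((j : ℕ) + cm n x.1) % n, Nat.mod_lt _ j.pos⟩ = true :=
        hs0 _ (by show ((j : ℕ) + cm n x.1) % n = 0; rw [heq, Nat.mod_self])
      rw [this] at hsf
      exact Bool.noConfusion hsf
    · have hjidx : ((j : ℕ) + cm n x.1) % n = (j : ℕ) + cm n x.1 - n := by
        rw [mod_cases n _ (by omega), if_neg (by omega)]
      have hval := hadjv ((i : ℕ) + cm n x.1 - n) (((j : ℕ) + cm n x.1) % n)
        (by omega) (Nat.mod_lt _ j.pos) (by omega) hsf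
      rw [hwv, hwv, hjidx] at hval
      split_ifs at hval ⊢ <;> omega
  · -- first count = b
    have hfb : ((univ : Finset (Fin n)).filter (fun i : Fin n => x.2 i = true ∧ 2 ≤ ((x.1 i : ℕ))))
        = ((univ : Finset (Fin n)).filter
            (fun i : Fin n => x.2 i = true ∧ cm n x.1 ≤ (i : ℕ))) :=
      Finset.filter_congr (fun k _ => by
        have := hchar k
        constructor
        · rintro ⟨hs, hv⟩; exact ⟨hs, by omega⟩
        · rintro ⟨hs, hv⟩; exact ⟨hs, by omega⟩)
    rw [← hb, hfb]
    apply Finset.card_nbij'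
      (i := fun i : Fin n => (⟨((i : ℕ) + cm n x.1) % n, Nat.mod_lt _ i.pos⟩ : Fin n))
      (j := fun k : Fin n => (⟨((k : ℕ) + (n - cm n x.1)) % n, Nat.mod_lt _ k.pos⟩ : Fin n))
    · intro i hi
      have hn0 : 0 < n := i.pos
      simp only [Finset.mem_coe, mem_filter, mem_univ, true_and] at hi ⊢
      obtain ⟨hsi, hiM⟩ := hi
      have hidx : ((i : ℕ) + cm n x.1) % n = (i : ℕ) + cm n x.1 :=
        Nat.mod_eq_of_lt (by omega)
      exact ⟨hsi, by show cm n x.1 ≤ ((i : ℕ) + cm n x.1) % n; omega⟩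
    · intro k hk
      have hn0 : 0 < n := k.pos
      have hklt := k.isLt
      simp only [Finset.mem_coe, mem_filter, mem_univ, true_and] at hk ⊢
      obtain ⟨hsk, hkm⟩ := hk
      have hgidx : ((k : ℕ) + (n - cm n x.1)) % n = (k : ℕ) - cm n x.1 := by
        rw [mod_cases n _ (by omega), if_neg (by omega)]; omega
      constructor
      · have hcomp : (((k : ℕ) + (n - cm n x.1)) % n + cm n x.1) % n = (k : ℕ) := by
          rw [hgidx]
          rw [show (k : ℕ) - cm n x.1 + cm n x.1 = (k : ℕ) by omega]
          exact Nat.mod_eq_of_lt k.isLt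
        exact (hx2 _ _ k hcomp).trans hsk
      · show ((k : ℕ) + (n - cm n x.1)) % n < n - cm n x.1
        omega
    · intro i hi
      have hn0 : 0 < n := i.pos
      simp only [Finset.mem_coe, mem_filter, mem_univ, true_and] at hi
      obtain ⟨hsi, hiM⟩ := hi
      have hidx : ((i : ℕ) + cm n x.1) % n = (i : ℕ) + cm n x.1 :=
        Nat.mod_eq_of_lt (by omega)
      apply Fin.ext
      show (((i : ℕ) + cm n x.1) % n + (n - cm n x.1)) % n = (i : ℕ)
      rw [hidx, show (i : ℕ) + cm n x.1 + (n - cm n x.1) = (i : ℕ) + n by omega,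
        Nat.add_mod_right]
      exact Nat.mod_eq_of_lt i.isLt
    · intro k hk
      have hn0 : 0 < n := k.pos
      have hklt := k.isLt
      simp only [Finset.mem_coe, mem_filter, mem_univ, true_and] at hk
      obtain ⟨hsk, hkm⟩ := hk
      have hgidx : ((k : ℕ) + (n - cm n x.1)) % n = (k : ℕ) - cm n x.1 := by
        rw [mod_cases n _ (by omega), if_neg (by omega)]; omega
      apply Fin.ext
      show (((k : ℕ) + (n - cm n x.1)) % n + cm n x.1) % n = (k : ℕ)
      rw [hgidx, show (k : ℕ) - cm n x.1 + cm n x.1 = (k : ℕ) by omega]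
      exact Nat.mod_eq_of_lt k.isLt
  · -- second count = a
    have hfa : ((univ : Finset (Fin n)).filter (fun i : Fin n => x.2 i = true ∧ ((x.1 i : ℕ) < 2)))
        = ((univ : Finset (Fin n)).filter
            (fun i : Fin n => x.2 i = true ∧ (i : ℕ) < cm n x.1)) :=
      Finset.filter_congr (fun k _ => by
        have := hchar k
        constructor
        · rintro ⟨hs, hv⟩; exact ⟨hs, by omega⟩
        · rintro ⟨hs, hv⟩; exact ⟨hs, by omega⟩)
    rw [← ha, hfa]
    apply Finset.card_nbij'
      (i := fun i : Fin n => (⟨((i : ℕ) + cm n x.1) % n, Nat.mod_lt _ i.pos⟩ : Fin n))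
      (j := fun k : Fin n => (⟨((k : ℕ) + (n - cm n x.1)) % n, Nat.mod_lt _ k.pos⟩ : Fin n))
    · intro i hi
      have hn0 : 0 < n := i.pos
      have hilt := i.isLt
      simp only [Finset.mem_coe, mem_filter, mem_univ, true_and] at hi ⊢
      obtain ⟨hsi, hiM⟩ := hi
      have hidx : ((i : ℕ) + cm n x.1) % n = (i : ℕ) + cm n x.1 - n := by
        rw [mod_cases n _ (by omega), if_neg (by omega)]
      exact ⟨hsi, by show ((i : ℕ) + cm n x.1) % n < cm n x.1; omega⟩
    · intro k hk
      have hn0 : 0 < n := k.pos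
      have hklt := k.isLt
      simp only [Finset.mem_coe, mem_filter, mem_univ, true_and] at hk ⊢
      obtain ⟨hsk, hkm⟩ := hk
      have hgidx : ((k : ℕ) + (n - cm n x.1)) % n = (k : ℕ) + (n - cm n x.1) :=
        Nat.mod_eq_of_lt (by omega)
      constructor
      · have hcomp : (((k : ℕ) + (n - cm n x.1)) % n + cm n x.1) % n = (k : ℕ) := by
          rw [hgidx, show (k : ℕ) + (n - cm n x.1) + cm n x.1 = (k : ℕ) + n by omega,
            Nat.add_mod_right]
          exact Nat.mod_eq_of_lt k.isLt
        exact (hx2 _ _ k hcomp).trans hsk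
      · show n - cm n x.1 ≤ ((k : ℕ) + (n - cm n x.1)) % n
        omega
    · intro i hi
      have hn0 : 0 < n := i.pos
      have hilt := i.isLt
      simp only [Finset.mem_coe, mem_filter, mem_univ, true_and] at hi
      obtain ⟨hsi, hiM⟩ := hi
      have hidx : ((i : ℕ) + cm n x.1) % n = (i : ℕ) + cm n x.1 - n := by
        rw [mod_cases n _ (by omega), if_neg (by omega)]
      apply Fin.ext
      show (((i : ℕ) + cm n x.1) % n + (n - cm n x.1)) % n = (i : ℕ)
      rw [hidx, show (i : ℕ) + cm n x.1 - n + (n - cm n x.1) = (i : ℕ) by omega]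
      exact Nat.mod_eq_of_lt i.isLt
    · intro k hk
      have hn0 : 0 < n := k.pos
      have hklt := k.isLt
      simp only [Finset.mem_coe, mem_filter, mem_univ, true_and] at hk
      obtain ⟨hsk, hkm⟩ := hk
      have hgidx : ((k : ℕ) + (n - cm n x.1)) % n = (k : ℕ) + (n - cm n x.1) :=
        Nat.mod_eq_of_lt (by omega)
      apply Fin.ext
      show (((k : ℕ) + (n - cm n x.1)) % n + cm n x.1) % n = (k : ℕ)
      rw [hgidx, show (k : ℕ) + (n - cm n x.1) + cm n x.1 = (k : ℕ) + n by omega,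
        Nat.add_mod_right]
      exact Nat.mod_eq_of_lt k.isLt

lemma bk_invol {n a b : ℕ} {x : (Fin n → Fin 4) × (Fin n → Bool)} (h : IsOneRowShBT n x a b) :
    bkMap n (bkMap n x) = x := by
  obtain ⟨hmn, h0, h2, h0m, h2m, hw⟩ := shape h
  have hY1 : (bkMap n x).1 = bkW n (n - cm n x.1) (ce2 n x.1) (ce0 n x.1) := rfl
  have hm' : cm n (bkMap n x).1 = n - cm n x.1 := by
    show ((univ : Finset (Fin n)).filter
      (fun i : Fin n => (((bkMap n x).1 i : ℕ) < 2))).card = n - cm n x.1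
    rw [show ((univ : Finset (Fin n)).filter (fun i : Fin n => (((bkMap n x).1 i : ℕ) < 2)))
        = ((univ : Finset (Fin n)).filter (fun i : Fin n => (i : ℕ) < n - cm n x.1)) from
      Finset.filter_congr (fun k _ => by rw [hY1, bkW_lt_two_iff])]
    exact card_filter_val_lt n (n - cm n x.1) (Nat.sub_le n (cm n x.1))
  have he0' : ce0 n (bkMap n x).1 = ce2 n x.1 := by
    show ((univ : Finset (Fin n)).filter
      (fun i : Fin n => bkW n (n - cm n x.1) (ce2 n x.1) (ce0 n x.1) i = 0)).card = ce2 n x.1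
    exact card_bkW_zero _ _ _ (Nat.sub_le n (cm n x.1)) h2 (fun h1 => by have := h2m h1; omega)
  have he2' : ce2 n (bkMap n x).1 = ce0 n x.1 := by
    show ((univ : Finset (Fin n)).filter
      (fun i : Fin n => bkW n (n - cm n x.1) (ce2 n x.1) (ce0 n x.1) i = 2)).card = ce0 n x.1
    exact card_bkW_two _ _ _ h0
      (fun h1 => by have h1' := h0m h1; exact Nat.sub_lt (by omega) (by omega))
  refine Prod.ext ?_ ?_
  · show bkW n (n - cm n (bkMap n x).1) (ce2 n (bkMap n x).1) (ce0 n (bkMap n x).1) = x.1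
    rw [hm', he0', he2', show n - (n - cm n x.1) = cm n x.1 by omega, ← hw]
  · funext i
    have hn0 : 0 < n := i.pos
    have hrfl : (bkMap n (bkMap n x)).2 i
        = x.2 ⟨((((i : ℕ) + cm n (bkMap n x).1) % n) + cm n x.1) % n,
            Nat.mod_lt _ i.pos⟩ := rfl
    rw [hrfl]
    have hilt := i.isLt
    have hkey : ((((i : ℕ) + cm n (bkMap n x).1) % n) + cm n x.1) % n = (i : ℕ) := by
      rw [hm']
      rcases Nat.lt_or_ge ((i : ℕ) + (n - cm n x.1)) n with hl | hg
      · rw [Nat.mod_eq_of_lt hl,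
          show (i : ℕ) + (n - cm n x.1) + cm n x.1 = (i : ℕ) + n by omega,
          Nat.add_mod_right]
        exact Nat.mod_eq_of_lt i.isLt
      · have h1 : ((i : ℕ) + (n - cm n x.1)) % n = (i : ℕ) + (n - cm n x.1) - n := by
          rw [mod_cases n _ (by omega), if_neg (by omega)]
        rw [h1, show (i : ℕ) + (n - cm n x.1) - n + cm n x.1 = (i : ℕ) by omega]
        exact Nat.mod_eq_of_lt i.isLt
    exact congrArg x.2 (Fin.ext hkey)

/-- For all a, b, the number of one-row semistandard shifted bar tableaux of shape (n) with
    entries in {1′, 1, 2′, 2} of weight (a, b) equals the number of weight (b, a). -/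
theorem stmt12 (n : ℕ) (hn : 1 ≤ n) (a b : ℕ) :
    ((Finset.univ : Finset ((Fin n → Fin 4) × (Fin n → Bool))).filter
        (fun x => IsOneRowShBT n x a b)).card
    = ((Finset.univ : Finset ((Fin n → Fin 4) × (Fin n → Bool))).filter
        (fun x => IsOneRowShBT n x b a)).card := by
  apply Finset.card_bij' (fun x _ => bkMap n x) (fun y _ => bkMap n y)
  · intro x hx
    rw [Finset.mem_filter] at hx ⊢
    exact ⟨Finset.mem_univ _, bk_mem hx.2⟩
  · intro y hy
    rw [Finset.mem_filter] at hy ⊢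
    exact ⟨Finset.mem_univ _, bk_mem hy.2⟩
  · intro x hx
    rw [Finset.mem_filter] at hx
    exact bk_invol hx.2
  · intro y hy
    rw [Finset.mem_filter] at hy
    exact bk_invol hy.2
end

section
/- For every integer n ≥ 2, the multivariate generating functions over one-row shifted plane partitions satisfy gq^comb_{(n)} = 2·gp^comb_{(n)} + β·gp^comb_{(n−1)}, as an identity of formal power series in ℤ[β][[x_1, x_2, …]]. -/
open scoped Classical

/-- The combinatorial generating function gq^comb_{(m)} of the one-row shape (m): a shifted
    plane partition of shape (m) is a weakly increasing sequence a : Fin m → ℕ in the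
    alphabet 1′ < 1 < 2′ < 2 < ⋯ encoded as 0 < 1 < 2 < 3 < ⋯ (the value v represents the
    letter v/2 + 1, primed iff v even).  Its weight at the letter k+1 is the number of
    positions equal to the unprimed letter (code 2k+1) plus 1 if the primed letter
    (code 2k) occurs.  The coefficient of x^α is (−β)^{m − |α|} times the number of such
    sequences of weight α, encoding gq^comb_{(m)} = ∑_T (−β)^{m−|wt(T)|} x^{wt(T)}. -/
noncomputable def gqrow (m : ℕ) : MvPowerSeries ℕ (Polynomial ℤ) :=
  fun α =>
    (Nat.card {a : Fin m → ℕ // Monotone a ∧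
        ∀ k : ℕ, α k = Set.ncard {j : Fin m | a j = 2 * k + 1}
          + (if ∃ j : Fin m, a j = 2 * k then 1 else 0)} : Polynomial ℤ)
      * (-Polynomial.X) ^ (m - α.sum (fun _ v => v))

/-- The combinatorial generating function gp^comb_{(m)}: the same sum as `gqrow m`,
    restricted to sequences whose first (diagonal) entry is primed (even code). -/
noncomputable def gprow (m : ℕ) : MvPowerSeries ℕ (Polynomial ℤ) :=
  fun α =>
    (Nat.card {a : Fin m → ℕ // Monotone a ∧ (∀ h : 0 < m, a ⟨0, h⟩ % 2 = 0) ∧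
        ∀ k : ℕ, α k = Set.ncard {j : Fin m | a j = 2 * k + 1}
          + (if ∃ j : Fin m, a j = 2 * k then 1 else 0)} : Polynomial ℤ)
      * (-Polynomial.X) ^ (m - α.sum (fun _ v => v))

def Wt (m : ℕ) (a : Fin m → ℕ) (α : ℕ →₀ ℕ) : Prop :=
  ∀ k : ℕ, α k = Set.ncard {j : Fin m | a j = 2 * k + 1}
      + (if ∃ j : Fin m, a j = 2 * k then 1 else 0)

def SQ (m : ℕ) (α : ℕ →₀ ℕ) : Set (Fin m → ℕ) := {a | Monotone a ∧ Wt m a α}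
def SP (m : ℕ) (α : ℕ →₀ ℕ) : Set (Fin m → ℕ) :=
  {a | Monotone a ∧ (∀ h : 0 < m, a ⟨0, h⟩ % 2 = 0) ∧ Wt m a α}
def SO (m : ℕ) (α : ℕ →₀ ℕ) : Set (Fin m → ℕ) :=
  {a | Monotone a ∧ (∀ h : 0 < m, a ⟨0, h⟩ % 2 = 1) ∧ Wt m a α}

lemma Wt.bound {m : ℕ} {a : Fin m → ℕ} {α : ℕ →₀ ℕ} (h : Wt m a α) (j : Fin m) :
    a j ≤ 2 * (α.support.sup id) + 1 := by
  set k := a j / 2 with hk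
  have hcases : a j = 2 * k ∨ a j = 2 * k + 1 := by omega
  have hαk : α k ≠ 0 := by
    rw [h k]
    rcases hcases with h1 | h1
    · rw [if_pos ⟨j, h1⟩]; omega
    · have : 0 < Set.ncard {j' : Fin m | a j' = 2 * k + 1} :=
        (Set.ncard_pos (Set.toFinite _)).mpr ⟨j, h1⟩
      omega
  have hmem : k ∈ α.support := Finsupp.mem_support_iff.mpr hαk
  have := Finset.le_sup (f := id) hmem
  simp only [id] at this
  omega

lemma finWt (m : ℕ) (α : ℕ →₀ ℕ) : {a : Fin m → ℕ | Wt m a α}.Finite := by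
  apply Set.Finite.subset
    (Set.Finite.pi (fun _ : Fin m => Set.finite_Iic (2 * (α.support.sup id) + 1)))
  intro a ha
  simp only [Set.mem_pi, Set.mem_univ, Set.mem_Iic, forall_true_left]
  intro j
  exact Wt.bound ha j

lemma Wt.sum_le {m : ℕ} {a : Fin m → ℕ} {α : ℕ →₀ ℕ} (h : Wt m a α) :
    α.sum (fun _ v => v) ≤ m := by
  set F : ℕ → Finset (Fin m) :=
    fun k => Finset.univ.filter (fun j : Fin m => a j = 2 * k ∨ a j = 2 * k + 1) with hF
  have hle : ∀ k ∈ α.support, α k ≤ (F k).card := by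
    intro k _
    have hsub : {j : Fin m | a j = 2 * k + 1} ⊆ ↑(F k) := by
      intro j hj; simp only [hF, Finset.coe_filter, Finset.mem_univ, true_and,
        Set.mem_setOf_eq]; exact Or.inr hj
    rw [h k]
    by_cases hex : ∃ j : Fin m, a j = 2 * k
    · obtain ⟨j0, hj0⟩ := hex
      rw [if_pos ⟨j0, hj0⟩]
      have hnm : j0 ∉ {j : Fin m | a j = 2 * k + 1} := by
        simp only [Set.mem_setOf_eq]; omega
      have h1 : Set.ncard {j : Fin m | a j = 2 * k + 1} + 1
          = (insert j0 {j : Fin m | a j = 2 * k + 1}).ncard :=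
        (Set.ncard_insert_of_notMem hnm (Set.toFinite _)).symm
      rw [h1]
      have hsub2 : insert j0 {j : Fin m | a j = 2 * k + 1} ⊆ ↑(F k) := by
        intro j hj
        rcases hj with rfl | hj
        · simp only [hF, Finset.coe_filter, Finset.mem_univ, true_and, Set.mem_setOf_eq]
          exact Or.inl hj0
        · exact hsub hj
      calc (insert j0 {j : Fin m | a j = 2 * k + 1}).ncard
          ≤ (↑(F k) : Set (Fin m)).ncard := Set.ncard_le_ncard hsub2 (Set.toFinite _)
        _ = (F k).card := Set.ncard_coe_finset _
    · rw [if_neg hex, Nat.add_zero]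
      calc Set.ncard {j : Fin m | a j = 2 * k + 1}
          ≤ (↑(F k) : Set (Fin m)).ncard := Set.ncard_le_ncard hsub (Set.toFinite _)
        _ = (F k).card := Set.ncard_coe_finset _
  have hdisj : ∀ k ∈ α.support, ∀ k' ∈ α.support, k ≠ k' → Disjoint (F k) (F k') := by
    intro k _ k' _ hkk'
    rw [Finset.disjoint_left]
    intro j hj hj'
    simp only [hF, Finset.mem_filter] at hj hj'
    omega
  calc α.sum (fun _ v => v) = ∑ k ∈ α.support, α k := rfl
    _ ≤ ∑ k ∈ α.support, (F k).card := Finset.sum_le_sum hle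
    _ = (α.support.biUnion F).card := (Finset.card_biUnion hdisj).symm
    _ ≤ Fintype.card (Fin m) := Finset.card_le_univ _
    _ = m := Fintype.card_fin m

/-- weight is unchanged by bumping a lone even diagonal entry to the next odd value. -/
lemma wt_update_eq {n : ℕ} [NeZero n] (a : Fin n → ℕ) (hz : a 0 % 2 = 0)
    (hgt : ∀ j : Fin n, j ≠ 0 → a 0 < a j) (k : ℕ) :
    Set.ncard {j : Fin n | Function.update a 0 (a 0 + 1) j = 2 * k + 1}
      + (if ∃ j : Fin n, Function.update a 0 (a 0 + 1) j = 2 * k then 1 else 0)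
    = Set.ncard {j : Fin n | a j = 2 * k + 1}
      + (if ∃ j : Fin n, a j = 2 * k then 1 else 0) := by
  set c := a 0 with hc
  obtain ⟨k0, hk0⟩ : ∃ k0, c = 2 * k0 := ⟨c / 2, by omega⟩
  by_cases hk : k = k0
  · subst hk
    have hset : {j : Fin n | Function.update a 0 (c + 1) j = 2 * k + 1}
        = insert 0 {j : Fin n | a j = 2 * k + 1} := by
      ext j
      by_cases hj : j = 0
      · subst hj
        simp only [Set.mem_setOf_eq, Function.update_self, Set.mem_insert_iff, true_or,
          iff_true]
        omega
      · simp only [Set.mem_setOf_eq, Function.update_of_ne hj, Set.mem_insert_iff, hj,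
          false_or]
    have hnm : (0 : Fin n) ∉ {j : Fin n | a j = 2 * k + 1} := by
      simp only [Set.mem_setOf_eq, ← hc]; omega
    have hnew : ¬ ∃ j : Fin n, Function.update a 0 (c + 1) j = 2 * k := by
      rintro ⟨j, hj⟩
      by_cases hjz : j = 0
      · subst hjz; rw [Function.update_self] at hj; omega
      · rw [Function.update_of_ne hjz] at hj
        have := hgt j hjz; omega
    have hold : ∃ j : Fin n, a j = 2 * k := ⟨0, by omega⟩
    rw [hset, Set.ncard_insert_of_notMem hnm (Set.toFinite _), if_neg hnew, if_pos hold]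
  · have hset : {j : Fin n | Function.update a 0 (c + 1) j = 2 * k + 1}
        = {j : Fin n | a j = 2 * k + 1} := by
      ext j
      by_cases hj : j = 0
      · subst hj
        simp only [Set.mem_setOf_eq, Function.update_self, ← hc]
        omega
      · simp only [Set.mem_setOf_eq, Function.update_of_ne hj]
    have hiff : (∃ j : Fin n, Function.update a 0 (c + 1) j = 2 * k)
        ↔ (∃ j : Fin n, a j = 2 * k) := by
      constructor
      · rintro ⟨j, hj⟩
        by_cases hjz : j = 0
        · subst hjz; rw [Function.update_self] at hj; omega
        · exact ⟨j, by rwa [Function.update_of_ne hjz] at hj⟩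
      · rintro ⟨j, hj⟩
        by_cases hjz : j = 0
        · subst hjz; rw [← hc] at hj; omega
        · exact ⟨j, by rwa [Function.update_of_ne hjz]⟩
    rw [hset]
    exact congrArg _ (if_congr hiff rfl rfl)

/-- weight is unchanged by deleting a repeated even diagonal entry. -/
lemma wt_tail_eq {m : ℕ} (a : Fin (m + 2) → ℕ) (hz : a 0 % 2 = 0)
    (heq : a 1 = a 0) (k : ℕ) :
    Set.ncard {j : Fin (m + 1) | a j.succ = 2 * k + 1}
      + (if ∃ j : Fin (m + 1), a j.succ = 2 * k then 1 else 0)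
    = Set.ncard {j : Fin (m + 2) | a j = 2 * k + 1}
      + (if ∃ j : Fin (m + 2), a j = 2 * k then 1 else 0) := by
  have hinj : Function.Injective (Fin.succ : Fin (m + 1) → Fin (m + 2)) :=
    Fin.succ_injective _
  have himg : Fin.succ '' {j : Fin (m + 1) | a j.succ = 2 * k + 1}
      = {j : Fin (m + 2) | a j = 2 * k + 1} := by
    ext j
    constructor
    · rintro ⟨j', hj', rfl⟩; exact hj'
    · intro hj
      have hjz : j ≠ 0 := by
        rintro rfl
        simp only [Set.mem_setOf_eq] at hj
        omega
      exact ⟨j.pred hjz, by simp only [Set.mem_setOf_eq, Fin.succ_pred]; exact hj,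
        Fin.succ_pred j hjz⟩
  have hiff : (∃ j : Fin (m + 1), a j.succ = 2 * k) ↔ (∃ j : Fin (m + 2), a j = 2 * k) := by
    constructor
    · rintro ⟨j, hj⟩; exact ⟨j.succ, hj⟩
    · rintro ⟨j, hj⟩
      by_cases hjz : j = 0
      · subst hjz
        exact ⟨0, by rw [show (0 : Fin (m+1)).succ = 1 from rfl, heq]; exact hj⟩
      · exact ⟨j.pred hjz, by rw [Fin.succ_pred]; exact hj⟩
  rw [← himg, Set.ncard_image_of_injective _ hinj]
  exact congrArg _ (if_congr hiff rfl rfl)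

lemma zero_eq_mk {n : ℕ} [NeZero n] (h : 0 < n) : (⟨0, h⟩ : Fin n) = 0 := by
  apply Fin.ext; simp

lemma cardA (n : ℕ) [NeZero n] (α : ℕ →₀ ℕ) :
    (SQ n α).ncard = (SO n α).ncard + (SP n α).ncard := by
  have hpos : 0 < n := Nat.pos_of_ne_zero (NeZero.ne n)
  have hu : SQ n α = SO n α ∪ SP n α := by
    ext a
    constructor
    · rintro ⟨hm, hw⟩
      rcases Nat.mod_two_eq_zero_or_one (a ⟨0, hpos⟩) with h | h
      · exact Or.inr ⟨hm, fun _ => h, hw⟩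
      · exact Or.inl ⟨hm, fun _ => h, hw⟩
    · rintro (⟨hm, _, hw⟩ | ⟨hm, _, hw⟩) <;> exact ⟨hm, hw⟩
  have hd : Disjoint (SO n α) (SP n α) := by
    rw [Set.disjoint_left]
    rintro a ⟨_, h1, _⟩ ⟨_, h0, _⟩
    have e1 := h1 hpos
    have e0 := h0 hpos
    omega
  rw [hu, Set.ncard_union_eq hd
    (Set.Finite.subset (finWt n α) (fun a ha => ha.2.2))
    (Set.Finite.subset (finWt n α) (fun a ha => ha.2.2))]

lemma cardB (m : ℕ) (α : ℕ →₀ ℕ) :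
    (SP (m + 2) α).ncard = (SO (m + 2) α).ncard + (SP (m + 1) α).ncard := by
  set T1 : Set (Fin (m + 2) → ℕ) := SP (m + 2) α ∩ {a | a 1 ≠ a 0} with hT1
  set T2 : Set (Fin (m + 2) → ℕ) := SP (m + 2) α ∩ {a | a 1 = a 0} with hT2
  have hsplit : SP (m + 2) α = T1 ∪ T2 := by
    ext a
    constructor
    · intro ha
      by_cases h : a 1 = a 0
      · exact Or.inr ⟨ha, h⟩
      · exact Or.inl ⟨ha, h⟩
    · rintro (⟨ha, _⟩ | ⟨ha, _⟩) <;> exact ha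
  have hdisj : Disjoint T1 T2 := by
    rw [Set.disjoint_left]
    rintro a ⟨_, h1⟩ ⟨_, h2⟩
    exact h1 h2
  have hfin : ∀ s : Set (Fin (m + 2) → ℕ), s ⊆ SP (m + 2) α → s.Finite := fun s hs =>
    Set.Finite.subset (finWt (m + 2) α) (fun a ha => (hs ha).2.2)
  -- T1 part: bump diagonal
  have hdiag0 : ∀ a ∈ SP (m + 2) α, a 0 % 2 = 0 := by
    rintro a ⟨_, hd, _⟩
    have := hd (by omega)
    rwa [zero_eq_mk] at this
  have hgt1 : ∀ a ∈ T1, ∀ j : Fin (m + 2), j ≠ 0 → a 0 < a j := by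
    rintro a ⟨⟨hm, hd, hw⟩, hne⟩ j hj
    have h01 : a 0 ≤ a 1 := hm (by simp [Fin.le_def])
    have h1j : a 1 ≤ a j := by
      apply hm
      rw [Fin.le_def]
      have : j.val ≠ 0 := fun h => hj (Fin.ext h)
      simp only [Fin.val_one]
      omega
    have : a 1 ≠ a 0 := hne
    omega
  have h1 : SO (m + 2) α = (fun a => Function.update a 0 (a 0 + 1)) '' T1 := by
    ext b
    constructor
    · rintro ⟨hm, hd, hw⟩
      have hb0 : b 0 % 2 = 1 := by
        have := hd (by omega); rwa [zero_eq_mk] at this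
      have hb0pos : 1 ≤ b 0 := by omega
      set a : Fin (m + 2) → ℕ := Function.update b 0 (b 0 - 1) with hadef
      have ha0 : a 0 = b 0 - 1 := Function.update_self _ _ _
      have haj : ∀ j : Fin (m + 2), j ≠ 0 → a j = b j := fun j hj =>
        Function.update_of_ne hj _ _
      have hb_ge : ∀ j : Fin (m + 2), b 0 ≤ b j := fun j => hm (Fin.zero_le j)
      have hgta : ∀ j : Fin (m + 2), j ≠ 0 → a 0 < a j := by
        intro j hj
        rw [ha0, haj j hj]
        have := hb_ge j
        omega
      have hza : a 0 % 2 = 0 := by rw [ha0]; omega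
      have hma : Monotone a := by
        intro i j hij
        by_cases hi : i = 0
        · subst hi
          by_cases hj : j = 0
          · subst hj; exact le_refl _
          · exact le_of_lt (hgta j hj)
        · have hj : j ≠ 0 := by
            intro h; subst h
            exact hi (le_antisymm (by exact hij) (Fin.zero_le i) ▸ rfl)
          rw [haj i hi, haj j hj]
          exact hm hij
        
      have hub : Function.update a 0 (a 0 + 1) = b := by
        funext j
        by_cases hj : j = 0
        · subst hj
          rw [Function.update_self, ha0]
          omega
        · rw [Function.update_of_ne hj, haj j hj]
      have hwa : Wt (m + 2) a α := by
        intro k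
        rw [hw k, ← wt_update_eq a hza hgta k, hub]
      refine ⟨a, ⟨⟨hma, fun h => by rwa [zero_eq_mk], hwa⟩, ?_⟩, hub⟩
      show a 1 ≠ a 0
      have h1ne0 : (1 : Fin (m + 2)) ≠ 0 := by
        intro h
        have := congrArg Fin.val h
        simp at this
      rw [haj 1 h1ne0, ha0]
      have := hb_ge 1
      omega
    · rintro ⟨a, haT1, rfl⟩
      obtain ⟨⟨hm, hd, hw⟩, hne⟩ := haT1
      show Function.update a 0 (a 0 + 1) ∈ SO (m + 2) α
      have hza : a 0 % 2 = 0 := hdiag0 a ⟨hm, hd, hw⟩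
      have hgta := hgt1 a ⟨⟨hm, hd, hw⟩, hne⟩
      refine ⟨?_, ?_, ?_⟩
      · intro i j hij
        by_cases hi : i = 0
        · subst hi
          by_cases hj : j = 0
          · subst hj; exact le_refl _
          · rw [Function.update_self, Function.update_of_ne hj]
            exact hgta j hj
        · have hj : j ≠ 0 := by
            intro h; subst h
            exact hi (le_antisymm hij (Fin.zero_le i) ▸ rfl)
          rw [Function.update_of_ne hi, Function.update_of_ne hj]
          exact hm hij
      · intro h
        rw [zero_eq_mk, Function.update_self]
        omega
      · intro k
        rw [hw k]
        exact (wt_update_eq a hza hgta k).symm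
  have hinj1 : Set.InjOn (fun a : Fin (m + 2) → ℕ => Function.update a 0 (a 0 + 1)) T1 := by
    rintro a _ a' _ hupd
    funext j
    by_cases hj : j = 0
    · subst hj
      have := congrFun hupd 0
      simp only [Function.update_self] at this
      omega
    · have := congrFun hupd j
      simpa only [Function.update_of_ne hj] using this
  -- T2 part: delete diagonal
  have h2 : SP (m + 1) α = (fun a => fun j : Fin (m + 1) => a j.succ) '' T2 := by
    ext b
    constructor
    · rintro ⟨hm, hd, hw⟩
      have hb0 : b 0 % 2 = 0 := by
        have := hd (by omega); rwa [zero_eq_mk] at this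
      set a : Fin (m + 2) → ℕ := fun j => b ⟨j.1 - 1, by omega⟩ with hadef
      have hab : ∀ j : Fin (m + 1), a j.succ = b j := by
        intro j
        show b _ = b j
        congr 1
      have ha0 : a 0 = b 0 := by
        show b _ = b 0
        congr 1
      have ha1 : a 1 = b 0 := by
        show b _ = b 0
        congr 1
      have hma : Monotone a := by
        intro i j hij
        apply hm
        rw [Fin.le_def] at hij ⊢
        simp only
        omega
      have heqa : a 1 = a 0 := by rw [ha0, ha1]
      have hza : a 0 % 2 = 0 := by rw [ha0]; exact hb0
      have hwa : Wt (m + 2) a α := by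
        intro k
        rw [hw k, ← wt_tail_eq a hza heqa k]
        simp only [hab]
      refine ⟨a, ⟨⟨hma, fun h => by rwa [zero_eq_mk, ha0], hwa⟩, heqa⟩, funext hab⟩
    · rintro ⟨a, ⟨⟨hm, hd, hw⟩, heqa⟩, rfl⟩
      show (fun j : Fin (m + 1) => a j.succ) ∈ SP (m + 1) α
      have hza : a 0 % 2 = 0 := by
        have := hd (by omega); rwa [zero_eq_mk] at this
      refine ⟨?_, ?_, ?_⟩
      · intro i j hij
        apply hm
        rw [Fin.le_def]
        simp only [Fin.val_succ]
        rw [Fin.le_def] at hij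
        omega
      · intro h
        rw [zero_eq_mk]
        show a (Fin.succ 0) % 2 = 0
        have : (Fin.succ 0 : Fin (m + 2)) = 1 := by apply Fin.ext; simp
        rw [this, heqa]
        exact hza
      · intro k
        rw [hw k]
        exact (wt_tail_eq a hza heqa k).symm
  have hinj2 : Set.InjOn (fun a : Fin (m + 2) → ℕ => fun j : Fin (m + 1) => a j.succ) T2 := by
    rintro a ⟨_, hea⟩ a' ⟨_, hea'⟩ htl
    funext j
    by_cases hj : j = 0
    · subst hj
      have h0 : (Fin.succ 0 : Fin (m + 2)) = 1 := by apply Fin.ext; simp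
      have := congrFun htl 0
      simp only at this
      rw [h0] at this
      show a 0 = a' 0
      rw [← hea, ← hea']
      exact this
    · have := congrFun htl (j.pred hj)
      simp only [Fin.succ_pred] at this
      exact this
  rw [hsplit, Set.ncard_union_eq hdisj
    (hfin T1 (Set.inter_subset_left)) (hfin T2 (Set.inter_subset_left)),
    h1, h2, Set.ncard_image_of_injOn hinj1, Set.ncard_image_of_injOn hinj2]

lemma SP_empty (m : ℕ) (α : ℕ →₀ ℕ) (h : m < α.sum (fun _ v => v)) :
    (SP m α).ncard = 0 := by
  have he : SP m α = ∅ := by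
    rw [Set.eq_empty_iff_forall_notMem]
    rintro a ⟨_, _, hw⟩
    exact absurd hw.sum_le (by omega)
  rw [he, Set.ncard_empty]

lemma gq_card (m : ℕ) (α : ℕ →₀ ℕ) :
    gqrow m α = ((SQ m α).ncard : Polynomial ℤ)
      * (-Polynomial.X) ^ (m - α.sum (fun _ v => v)) := by
  unfold gqrow
  congr 2

lemma gp_card (m : ℕ) (α : ℕ →₀ ℕ) :
    gprow m α = ((SP m α).ncard : Polynomial ℤ)
      * (-Polynomial.X) ^ (m - α.sum (fun _ v => v)) := by
  unfold gprow
  congr 2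

/-- For n ≥ 2, gq^comb_{(n)} = 2 gp^comb_{(n)} + β gp^comb_{(n−1)} as formal power series
    in ℤ[β][[x₁, x₂, …]]. -/
theorem stmt16 (n : ℕ) (hn : 2 ≤ n) :
    gqrow n = 2 * gprow n
      + (MvPowerSeries.C (σ := ℕ) (R := Polynomial ℤ)) Polynomial.X * gprow (n - 1) := by
  obtain ⟨m, rfl⟩ : ∃ m, n = m + 2 := ⟨n - 2, by omega⟩
  apply MvPowerSeries.ext
  intro α
  rw [map_add, two_mul, map_add, MvPowerSeries.coeff_C_mul]
  simp only [MvPowerSeries.coeff_apply]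
  have h21 : m + 2 - 1 = m + 1 := rfl
  rw [h21, gq_card, gp_card, gp_card]
  set s := α.sum (fun _ v => v) with hs
  have hA := cardA (m + 2) α
  have hB := cardB m α
  have hstar : (SQ (m + 2) α).ncard + (SP (m + 1) α).ncard
      = 2 * (SP (m + 2) α).ncard := by omega
  rcases le_or_gt s (m + 1) with h | h
  · have he : m + 2 - s = (m + 1 - s) + 1 := by omega
    rw [he, pow_succ]
    have hstar' : ((SQ (m + 2) α).ncard : Polynomial ℤ) + (SP (m + 1) α).ncard
        = 2 * (SP (m + 2) α).ncard := by exact_mod_cast congrArg (Nat.cast : ℕ → Polynomial ℤ) hstar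
    linear_combination (-(Polynomial.X * (-Polynomial.X) ^ (m + 1 - s))) * hstar'
  · have h0 : (SP (m + 1) α).ncard = 0 := SP_empty _ _ h
    rw [h0] at hstar
    have hstar2 : ((SQ (m + 2) α).ncard : Polynomial ℤ)
        = 2 * (SP (m + 2) α).ncard := by exact_mod_cast congrArg (Nat.cast : ℕ → Polynomial ℤ) (by omega : (SQ (m+2) α).ncard = 2 * (SP (m+2) α).ncard)
    rw [h0]
    push_cast
    linear_combination ((-Polynomial.X) ^ (m + 2 - s)) * hstar2
end
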